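/- With κ_π(T_1,…,T_n) := Σ_{σ ∈ BNC(χ), σ ≤ π} φ_σ(T_1,…,T_n) μ_{BNC}(σ,π), the cumulant functional factors over blocks: κ_π(T_1,…,T_n) = Π_{t=1}^k κ_{π|_{V_t}}(T_{k_{t,1}},…,T_{k_{t,m_t}}), where V_t = {k_{t,1}<⋯<k_{t,m_t}} are the blocks of π, and moreover φ(T_1⋯T_n) = Σ_{π ∈ BNC(χ)} κ_π(T_1,…,T_n). -/

import Mathlib

open scoped BigOperators

def permAct {n : ℕ} (s : Equiv.Perm (Fin n)) (π : Setoid (Fin n)) : Setoid (Fin n) :=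
  Setoid.comap (fun x => s⁻¹ x) π

def IsNonCrossing {n : ℕ} (π : Setoid (Fin n)) : Prop :=
  ∀ a b c d : Fin n, a < b → b < c → c < d → π.r a c → π.r b d → π.r a b

def leftF {n : ℕ} (χ : Fin n → Bool) : Finset (Fin n) :=
  Finset.univ.filter fun i => χ i = true

def rightF {n : ℕ} (χ : Fin n → Bool) : Finset (Fin n) :=
  Finset.univ.filter fun i => χ i = false

theorem card_leftF_add_rightF {n : ℕ} (χ : Fin n → Bool) :
    (leftF χ).card + (rightF χ).card = n := by
  classical
  have h := Finset.card_filter_add_card_filter_not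
    (s := (Finset.univ : Finset (Fin n))) (p := fun i => χ i = true)
  simpa [leftF, rightF, Bool.not_eq_true] using h

noncomputable def eqLeft {n : ℕ} (χ : Fin n → Bool) :
    Fin (leftF χ).card ≃ {x : Fin n // χ x = true} :=
  ((leftF χ).orderIsoOfFin rfl).toEquiv.trans
    (Equiv.subtypeEquivRight (fun x => by simp [leftF]))

noncomputable def eqRight {n : ℕ} (χ : Fin n → Bool) :
    Fin (rightF χ).card ≃ {x : Fin n // ¬ χ x = true} :=
  (Fin.revPerm.trans ((rightF χ).orderIsoOfFin rfl).toEquiv).trans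
    (Equiv.subtypeEquivRight (fun x => by simp [rightF]))

noncomputable def sPerm {n : ℕ} (χ : Fin n → Bool) : Equiv.Perm (Fin n) :=
  (((finCongr (card_leftF_add_rightF χ).symm).trans finSumFinEquiv.symm).trans
    ((eqLeft χ).sumCongr (eqRight χ))).trans (Equiv.sumCompl fun i => χ i = true)

def BNC {n : ℕ} (χ : Fin n → Bool) : Set (Setoid (Fin n)) :=
  {π | ∃ σ, IsNonCrossing σ ∧ π = permAct (sPerm χ) σ}

noncomputable def blockFinset {n : ℕ} (V : Set (Fin n)) : Finset (Fin n) :=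
  V.toFinite.toFinset

noncomputable def blockCard {n : ℕ} (V : Set (Fin n)) : ℕ := (blockFinset V).card

noncomputable def enum {n : ℕ} (V : Set (Fin n)) : Fin (blockCard V) → Fin n :=
  fun i => (blockFinset V).orderEmbOfFin rfl i

/-- `φ_π(T_1,…,T_n) = Π_{V ∈ π} φ(T_{k_1}⋯T_{k_m})`, the product over blocks
`V = {k_1<⋯<k_m}` of the moments along each block. -/
noncomputable def phiP {A : Type*} [Ring A] [Algebra ℂ A] {n : ℕ}
    (φ : A →ₗ[ℂ] ℂ) (π : Setoid (Fin n)) (T : Fin n → A) : ℂ :=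
  ∏ᶠ V ∈ Setoid.classes π,
    φ (List.ofFn (fun i : Fin (blockCard V) => T (enum V i))).prod

/-- `κ_π(T_1,…,T_n) = Σ_{σ ∈ BNC(χ), σ ≤ π} φ_σ(T_1,…,T_n) μ_BNC(σ,π)`. -/
noncomputable def kappaP {A : Type*} [Ring A] [Algebra ℂ A] {n : ℕ}
    (φ : A →ₗ[ℂ] ℂ)
    (μ : ∀ m : ℕ, (Fin m → Bool) → Setoid (Fin m) → Setoid (Fin m) → ℂ)
    (χ : Fin n → Bool) (π : Setoid (Fin n)) (T : Fin n → A) : ℂ :=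
  ∑ᶠ σ ∈ {σ | σ ∈ BNC χ ∧ σ ≤ π}, phiP φ σ T * μ n χ σ π

section Aux
open scoped Classical

noncomputable instance setoidFintype {n : ℕ} : Fintype (Setoid (Fin n)) :=
  Fintype.ofInjective (fun s : Setoid (Fin n) => s.r)
    (fun s t h => by cases s; cases t; cases h; rfl)

variable {n : ℕ}

lemma mem_blockFinset {V : Set (Fin n)} {x : Fin n} : x ∈ blockFinset V ↔ x ∈ V :=
  Set.Finite.mem_toFinset _

lemma enum_mem {V : Set (Fin n)} (i : Fin (blockCard V)) : enum V i ∈ V :=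
  mem_blockFinset.mp (Finset.orderEmbOfFin_mem _ rfl i)

lemma enum_strictMono {V : Set (Fin n)} : StrictMono (enum V) :=
  ((blockFinset V).orderEmbOfFin rfl).strictMono

lemma enum_injective {V : Set (Fin n)} : Function.Injective (enum V) :=
  enum_strictMono.injective

lemma enum_surj {V : Set (Fin n)} {x : Fin n} (hx : x ∈ V) :
    ∃ i, enum V i = x := by
  have : x ∈ Set.range ((blockFinset V).orderEmbOfFin rfl) := by
    rw [Finset.range_orderEmbOfFin]
    exact mem_blockFinset.mpr hx
  obtain ⟨i, hi⟩ := this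
  exact ⟨i, hi⟩

lemma comap_rel {α β : Type*} (f : α → β) (s : Setoid β) (a b : α) :
    (Setoid.comap f s).r a b ↔ s.r (f a) (f b) := Iff.rfl

lemma setoid_le_iff {σ π : Setoid (Fin n)} : σ ≤ π ↔ ∀ x y, σ.r x y → π.r x y := by
  constructor
  · intro h x y hxy; exact h hxy
  · intro h x y hxy; exact h x y hxy

-- classes basics
lemma mem_own_class {π : Setoid (Fin n)} (x : Fin n) : x ∈ {y | π.r y x} :=
  π.refl' x

lemma class_mem_classes {π : Setoid (Fin n)} (x : Fin n) :
    {y | π.r y x} ∈ Setoid.classes π := ⟨x, rfl⟩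

lemma rel_of_mem_class {π : Setoid (Fin n)} {V : Set (Fin n)} (hV : V ∈ Setoid.classes π)
    {x y : Fin n} (hx : x ∈ V) (hy : y ∈ V) : π.r x y := by
  obtain ⟨w, rfl⟩ := hV
  exact π.trans' hx (π.symm' hy)

lemma class_unique {π : Setoid (Fin n)} {V W : Set (Fin n)}
    (hV : V ∈ Setoid.classes π) (hW : W ∈ Setoid.classes π) {x : Fin n}
    (hxV : x ∈ V) (hxW : x ∈ W) : V = W := by
  obtain ⟨b, hb, hbu⟩ := (Setoid.isPartition_classes π).2 x
  rw [hbu V ⟨hV, hxV⟩, hbu W ⟨hW, hxW⟩]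

lemma mem_class_of_rel {π : Setoid (Fin n)} {V : Set (Fin n)} (hV : V ∈ Setoid.classes π)
    {x y : Fin n} (hx : x ∈ V) (hxy : π.r x y) : y ∈ V := by
  obtain ⟨w, rfl⟩ := hV
  exact π.trans' (π.symm' hxy) hx

lemma comap_enum_top {π : Setoid (Fin n)} {V : Set (Fin n)} (hV : V ∈ Setoid.classes π) :
    Setoid.comap (enum V) π = ⊤ := by
  apply Setoid.ext
  intro i j
  simp only [Setoid.top_def]
  constructor
  · intro _; trivial
  · intro _; exact rel_of_mem_class hV (enum_mem i) (enum_mem j)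

end Aux

lemma perm_apply_inv_self {α : Type*} (f : Equiv.Perm α) (x : α) : f (f⁻¹ x) = x :=
  f.apply_symm_apply x

lemma perm_inv_apply_self {α : Type*} (f : Equiv.Perm α) (x : α) : f⁻¹ (f x) = x :=
  f.symm_apply_apply x

section Aux2
open scoped Classical
variable {n : ℕ}

lemma sPerm_apply_left (χ : Fin n → Bool) (k : Fin n) (hk : (k : ℕ) < (leftF χ).card) :
    sPerm χ k = (leftF χ).orderEmbOfFin rfl ⟨k, hk⟩ := by
  have h1 : (finCongr (card_leftF_add_rightF χ).symm) k
      = Fin.castAdd (rightF χ).card ⟨k, hk⟩ := by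
    ext; simp
  simp only [sPerm, Equiv.trans_apply, h1, finSumFinEquiv_symm_apply_castAdd,
    Equiv.sumCongr_apply, Sum.map_inl, Equiv.sumCompl_apply_inl]
  rfl

lemma sPerm_apply_right (χ : Fin n → Bool) (k : Fin n) (hk : (leftF χ).card ≤ (k : ℕ)) :
    sPerm χ k = (rightF χ).orderEmbOfFin rfl
      (Fin.rev ⟨(k : ℕ) - (leftF χ).card, by
        have := k.2; have := card_leftF_add_rightF χ; omega⟩) := by
  have hlt : (k : ℕ) - (leftF χ).card < (rightF χ).card := by
    have := k.2; have := card_leftF_add_rightF χ; omega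
  have h1 : (finCongr (card_leftF_add_rightF χ).symm) k
      = Fin.natAdd (leftF χ).card ⟨(k : ℕ) - (leftF χ).card, hlt⟩ := by
    ext; simp; omega
  simp only [sPerm, Equiv.trans_apply, h1, finSumFinEquiv_symm_apply_natAdd,
    Equiv.sumCongr_apply, Sum.map_inr, Equiv.sumCompl_apply_inr]
  rfl

variable {χ : Fin n → Bool}

lemma sPerm_left_of_lt {k : Fin n} (hk : (k : ℕ) < (leftF χ).card) :
    χ (sPerm χ k) = true := by
  rw [sPerm_apply_left χ k hk]
  have := Finset.orderEmbOfFin_mem (leftF χ) rfl ⟨k, hk⟩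
  simp only [leftF, Finset.mem_filter] at this
  exact this.2

lemma sPerm_right_of_le {k : Fin n} (hk : (leftF χ).card ≤ (k : ℕ)) :
    χ (sPerm χ k) = false := by
  rw [sPerm_apply_right χ k hk]
  have := Finset.orderEmbOfFin_mem (rightF χ) rfl
    (Fin.rev ⟨(k : ℕ) - (leftF χ).card, by
      have := k.2; have := card_leftF_add_rightF χ; omega⟩)
  simp only [rightF, Finset.mem_filter] at this
  exact this.2

lemma sPerm_lt_of_left {k l : Fin n} (h : k < l) (hl : (l : ℕ) < (leftF χ).card) :
    sPerm χ k < sPerm χ l := by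
  have hk : (k : ℕ) < (leftF χ).card := lt_trans h hl
  rw [sPerm_apply_left χ k hk, sPerm_apply_left χ l hl]
  exact ((leftF χ).orderEmbOfFin rfl).strictMono h

lemma sPerm_lt_of_right {k l : Fin n} (h : k < l) (hk : (leftF χ).card ≤ (k : ℕ)) :
    sPerm χ l < sPerm χ k := by
  have hl : (leftF χ).card ≤ (l : ℕ) := le_trans hk (le_of_lt h)
  rw [sPerm_apply_right χ k hk, sPerm_apply_right χ l hl]
  refine ((rightF χ).orderEmbOfFin rfl).strictMono ?_
  rw [Fin.rev_lt_rev]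
  have h' : (k : ℕ) < (l : ℕ) := h
  simp only [Fin.lt_def]
  omega

lemma inv_lt_of_left {x : Fin n} (hx : χ x = true) :
    ((((sPerm χ)⁻¹ : Equiv.Perm (Fin n)) x : Fin n) : ℕ) < (leftF χ).card := by
  by_contra hge
  push_neg at hge
  have := sPerm_right_of_le (χ := χ) (k := (sPerm χ)⁻¹ x) hge
  rw [perm_apply_inv_self] at this
  rw [hx] at this; exact Bool.noConfusion this

lemma inv_ge_of_right {x : Fin n} (hx : χ x = false) :
    (leftF χ).card ≤ ((((sPerm χ)⁻¹ : Equiv.Perm (Fin n)) x : Fin n) : ℕ) := by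
  by_contra hlt
  push_neg at hlt
  have := sPerm_left_of_lt (χ := χ) (k := (sPerm χ)⁻¹ x) hlt
  rw [perm_apply_inv_self] at this
  rw [hx] at this; exact Bool.noConfusion this

lemma inv_lt_inv_of_left {x y : Fin n} (hxy : x < y) (hx : χ x = true) (hy : χ y = true) :
    ((sPerm χ)⁻¹ : Equiv.Perm (Fin n)) x < ((sPerm χ)⁻¹ : Equiv.Perm (Fin n)) y := by
  rcases lt_trichotomy (((sPerm χ)⁻¹ : Equiv.Perm (Fin n)) x) (((sPerm χ)⁻¹ : Equiv.Perm (Fin n)) y) with h | h | h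
  · exact h
  · exact absurd (by rw [← perm_apply_inv_self (sPerm χ) x, ← perm_apply_inv_self (sPerm χ) y, h]) (ne_of_lt hxy)
  · have := sPerm_lt_of_left h (inv_lt_of_left hx)
    rw [perm_apply_inv_self, perm_apply_inv_self] at this
    exact absurd this (not_lt_of_gt hxy)

lemma inv_lt_inv_of_right {x y : Fin n} (hxy : x < y) (hx : χ x = false) (hy : χ y = false) :
    ((sPerm χ)⁻¹ : Equiv.Perm (Fin n)) y < ((sPerm χ)⁻¹ : Equiv.Perm (Fin n)) x := by
  rcases lt_trichotomy (((sPerm χ)⁻¹ : Equiv.Perm (Fin n)) y) (((sPerm χ)⁻¹ : Equiv.Perm (Fin n)) x) with h | h | h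
  · exact h
  · exact absurd (by rw [← perm_apply_inv_self (sPerm χ) x, ← perm_apply_inv_self (sPerm χ) y, h.symm]) (ne_of_lt hxy)
  · have := sPerm_lt_of_right h (inv_ge_of_right hx)
    rw [perm_apply_inv_self, perm_apply_inv_self] at this
    exact absurd this (not_lt_of_gt hxy)

/-- The structural map from block-spine positions to global spine positions. -/
noncomputable def hmap (χ : Fin n → Bool) (V : Set (Fin n)) :
    Fin (blockCard V) → Fin n :=
  fun i => ((sPerm χ)⁻¹ : Equiv.Perm (Fin n))
    (enum V (sPerm (fun j => χ (enum V j)) i))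

lemma hmap_strictMono (χ : Fin n → Bool) (V : Set (Fin n)) : StrictMono (hmap χ V) := by
  intro i j hij
  set χ' : Fin (blockCard V) → Bool := fun j => χ (enum V j) with hχ'
  by_cases hj : ((j : Fin (blockCard V)) : ℕ) < (leftF χ').card
  · have hs := sPerm_lt_of_left hij hj
    have hg := enum_strictMono (V := V) hs
    exact inv_lt_inv_of_left hg (sPerm_left_of_lt (lt_trans hij hj)) (sPerm_left_of_lt hj)
  · push_neg at hj
    by_cases hi : ((i : Fin (blockCard V)) : ℕ) < (leftF χ').card
    · have h1 := inv_lt_of_left (χ := χ) (x := enum V (sPerm χ' i)) (sPerm_left_of_lt hi)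
      have h2 := inv_ge_of_right (χ := χ) (x := enum V (sPerm χ' j)) (sPerm_right_of_le hj)
      exact Fin.lt_def.mpr (lt_of_lt_of_le h1 h2)
    · push_neg at hi
      have hs := sPerm_lt_of_right hij hi
      have hg := enum_strictMono (V := V) hs
      exact inv_lt_inv_of_right hg (sPerm_right_of_le hj) (sPerm_right_of_le hi)

/-- Characterization of `BNC`. -/
lemma mem_BNC_iff {σ : Setoid (Fin n)} :
    σ ∈ BNC χ ↔ IsNonCrossing (Setoid.comap (sPerm χ) σ) := by
  constructor
  · rintro ⟨τ, hτ, rfl⟩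
    have : Setoid.comap (⇑(sPerm χ)) (permAct (sPerm χ) τ) = τ := by
      apply Setoid.ext; intro a b
      show τ.r ((sPerm χ)⁻¹ (sPerm χ a)) ((sPerm χ)⁻¹ (sPerm χ b)) ↔ τ.r a b
      rw [perm_inv_apply_self, perm_inv_apply_self]
    rw [this]; exact hτ
  · intro h
    refine ⟨Setoid.comap (sPerm χ) σ, h, Setoid.ext fun a b => ?_⟩
    show σ.r a b ↔ σ.r (sPerm χ ((sPerm χ)⁻¹ a)) (sPerm χ ((sPerm χ)⁻¹ b))
    rw [perm_apply_inv_self, perm_apply_inv_self]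

lemma top_mem_BNC : (⊤ : Setoid (Fin n)) ∈ BNC χ := by
  rw [mem_BNC_iff]
  intro a b c d _ _ _ _ _
  trivial

end Aux2
section Aux3
open scoped Classical
variable {n : ℕ} {χ : Fin n → Bool}

lemma nc_comap_strictMono {m : ℕ} {σ : Setoid (Fin n)} {f : Fin m → Fin n}
    (hσ : IsNonCrossing σ) (hf : StrictMono f) : IsNonCrossing (Setoid.comap f σ) := by
  intro a b c d hab hbc hcd hac hbd
  exact hσ (f a) (f b) (f c) (f d) (hf hab) (hf hbc) (hf hcd) hac hbd

lemma comap_comap_eq_hmap {σ : Setoid (Fin n)} (V : Set (Fin n)) :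
    Setoid.comap (sPerm (fun j => χ (enum V j))) (Setoid.comap (enum V) σ)
      = Setoid.comap (hmap χ V) (Setoid.comap (sPerm χ) σ) := by
  apply Setoid.ext; intro i j
  show σ.r _ _ ↔ σ.r (sPerm χ (hmap χ V i)) (sPerm χ (hmap χ V j))
  simp only [hmap, perm_apply_inv_self]

lemma restrict_mem_BNC {σ : Setoid (Fin n)} (hσ : σ ∈ BNC χ) (V : Set (Fin n)) :
    Setoid.comap (enum V) σ ∈ BNC (fun i => χ (enum V i)) := by
  rw [mem_BNC_iff] at hσ ⊢
  rw [comap_comap_eq_hmap]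
  exact nc_comap_strictMono hσ (hmap_strictMono χ V)

lemma join_mem_BNC {π σ : Setoid (Fin n)} (hπ : π ∈ BNC χ) (hle : σ ≤ π)
    (hres : ∀ V ∈ Setoid.classes π,
      Setoid.comap (enum V) σ ∈ BNC (fun i => χ (enum V i))) :
    σ ∈ BNC χ := by
  rw [mem_BNC_iff] at hπ ⊢
  intro a b c d hab hbc hcd hac hbd
  set s := sPerm χ
  -- hac : σ.r (s a) (s c), hbd : σ.r (s b) (s d)
  have hπab : π.r (s a) (s b) := hπ a b c d hab hbc hcd (hle hac) (hle hbd)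
  set V : Set (Fin n) := {u | π.r u (s a)} with hVdef
  have hV : V ∈ Setoid.classes π := class_mem_classes _
  have hxa : s a ∈ V := mem_own_class _
  have hxb : s b ∈ V := π.symm' hπab
  have hxc : s c ∈ V := π.symm' (hle hac)
  have hxd : s d ∈ V := π.trans' (π.symm' (hle hbd)) (π.symm' hπab)
  obtain ⟨ia, hia⟩ := enum_surj hxa
  obtain ⟨ib, hib⟩ := enum_surj hxb
  obtain ⟨ic, hic⟩ := enum_surj hxc
  obtain ⟨id', hid⟩ := enum_surj hxd
  have hτ' : IsNonCrossing (Setoid.comap (sPerm (fun j => χ (enum V j)))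
      (Setoid.comap (enum V) σ)) := (mem_BNC_iff).mp (hres V hV)
  rw [comap_comap_eq_hmap] at hτ'
  set s' := sPerm (fun j => χ (enum V j))
  set pa := (s'⁻¹ : Equiv.Perm _) ia
  set pb := (s'⁻¹ : Equiv.Perm _) ib
  set pc := (s'⁻¹ : Equiv.Perm _) ic
  set pd := (s'⁻¹ : Equiv.Perm _) id'
  have hha : hmap χ V pa = a := by
    simp only [hmap, pa]
    rw [perm_apply_inv_self, hia, perm_inv_apply_self]
  have hhb : hmap χ V pb = b := by
    simp only [hmap, pb]
    rw [perm_apply_inv_self, hib, perm_inv_apply_self]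
  have hhc : hmap χ V pc = c := by
    simp only [hmap, pc]
    rw [perm_apply_inv_self, hic, perm_inv_apply_self]
  have hhd : hmap χ V pd = d := by
    simp only [hmap, pd]
    rw [perm_apply_inv_self, hid, perm_inv_apply_self]
  have hm := hmap_strictMono χ V
  have h1 : pa < pb := hm.lt_iff_lt.mp (by rw [hha, hhb]; exact hab)
  have h2 : pb < pc := hm.lt_iff_lt.mp (by rw [hhb, hhc]; exact hbc)
  have h3 : pc < pd := hm.lt_iff_lt.mp (by rw [hhc, hhd]; exact hcd)
  have hrac : (Setoid.comap (hmap χ V) (Setoid.comap (sPerm χ) σ)).r pa pc := by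
    show σ.r (sPerm χ (hmap χ V pa)) (sPerm χ (hmap χ V pc))
    rw [hha, hhc]; exact hac
  have hrbd : (Setoid.comap (hmap χ V) (Setoid.comap (sPerm χ) σ)).r pb pd := by
    show σ.r (sPerm χ (hmap χ V pb)) (sPerm χ (hmap χ V pd))
    rw [hhb, hhd]; exact hbd
  have := hτ' pa pb pc pd h1 h2 h3 hrac hrbd
  show σ.r (sPerm χ a) (sPerm χ b)
  rw [← hha, ← hhb]
  exact this

lemma eq_of_restrictions_eq {π σ₁ σ₂ : Setoid (Fin n)} (h1 : σ₁ ≤ π) (h2 : σ₂ ≤ π)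
    (h : ∀ V ∈ Setoid.classes π, Setoid.comap (enum V) σ₁ = Setoid.comap (enum V) σ₂) :
    σ₁ = σ₂ := by
  have key : ∀ σ₁ σ₂ : Setoid (Fin n), σ₁ ≤ π → σ₂ ≤ π →
      (∀ V ∈ Setoid.classes π, Setoid.comap (enum V) σ₁ = Setoid.comap (enum V) σ₂) →
      σ₁ ≤ σ₂ := by
    intro σ₁ σ₂ h1 _ h
    rw [setoid_le_iff]
    intro x y hxy
    have hπ : π.r x y := h1 hxy
    set V : Set (Fin n) := {u | π.r u x} with hVdef
    have hV : V ∈ Setoid.classes π := class_mem_classes _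
    obtain ⟨i, hi⟩ := enum_surj (mem_own_class (π := π) x)
    obtain ⟨j, hj⟩ := enum_surj (show y ∈ V from π.symm' hπ)
    have : (Setoid.comap (enum V) σ₁).r i j := by
      show σ₁.r _ _; rw [hi, hj]; exact hxy
    rw [h V hV] at this
    have : σ₂.r (enum V i) (enum V j) := this
    rwa [hi, hj] at this
  exact le_antisymm (key σ₁ σ₂ h1 h2 h) (key σ₂ σ₁ h2 h1 (fun V hV => (h V hV).symm))

/-- Join of a family of setoids on the blocks of `π`. -/
noncomputable def joinS (π : Setoid (Fin n)) (p : ∀ V : Set (Fin n), Setoid (Fin (blockCard V))) :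
    Setoid (Fin n) where
  r x y := ∃ V ∈ Setoid.classes π, ∃ i j, enum V i = x ∧ enum V j = y ∧ (p V).r i j
  iseqv := by
    constructor
    · intro x
      refine ⟨{u | π.r u x}, class_mem_classes _, ?_⟩
      obtain ⟨i, hi⟩ := enum_surj (mem_own_class (π := π) x)
      exact ⟨i, i, hi, hi, (p _).refl' i⟩
    · rintro x y ⟨V, hV, i, j, hi, hj, hr⟩
      exact ⟨V, hV, j, i, hj, hi, (p V).symm' hr⟩
    · rintro x y z ⟨V, hV, i, j, hi, hj, hr⟩ ⟨V', hV', i', j', hi', hj', hr'⟩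
      have hyV : y ∈ V := hj ▸ enum_mem j
      have hyV' : y ∈ V' := hi' ▸ enum_mem i'
      have hVV' : V = V' := class_unique hV hV' hyV hyV'
      subst hVV'
      have : j = i' := enum_injective (hj.trans hi'.symm)
      subst this
      exact ⟨V, hV, i, j', hi, hj', (p V).trans' hr hr'⟩

lemma joinS_le {π : Setoid (Fin n)} {p : ∀ V : Set (Fin n), Setoid (Fin (blockCard V))} :
    joinS π p ≤ π := by
  rw [setoid_le_iff]
  rintro x y ⟨V, hV, i, j, hi, hj, _⟩
  exact rel_of_mem_class hV (hi ▸ enum_mem i) (hj ▸ enum_mem j)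

lemma comap_enum_joinS {π : Setoid (Fin n)} {p : ∀ V : Set (Fin n), Setoid (Fin (blockCard V))}
    {V : Set (Fin n)} (hV : V ∈ Setoid.classes π) :
    Setoid.comap (enum V) (joinS π p) = p V := by
  apply Setoid.ext; intro i j
  constructor
  · rintro ⟨V', hV', i', j', hi', hj', hr⟩
    have hV1 : enum V i ∈ V := enum_mem i
    have hV2 : enum V i ∈ V' := hi' ▸ enum_mem i'
    have hVV' : V = V' := class_unique hV hV' hV1 hV2
    subst hVV'
    have hii : i' = i := enum_injective hi'
    have hjj : j' = j := enum_injective hj'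
    subst hii; subst hjj
    exact hr
  · intro h
    exact ⟨V, hV, i, j, rfl, rfl, h⟩

end Aux3
section Aux4
open scoped Classical
variable {n : ℕ}

noncomputable def CFin {k : ℕ} (ρ : Setoid (Fin k)) : Finset (Set (Fin k)) :=
  (Setoid.classes ρ).toFinite.toFinset

lemma mem_CFin {k : ℕ} {ρ : Setoid (Fin k)} {V : Set (Fin k)} :
    V ∈ CFin ρ ↔ V ∈ Setoid.classes ρ := Set.Finite.mem_toFinset _

lemma coe_CFin {k : ℕ} (ρ : Setoid (Fin k)) : (↑(CFin ρ) : Set (Set (Fin k))) = Setoid.classes ρ :=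
  Set.Finite.coe_toFinset _

lemma finprod_classes_eq {k : ℕ} {M : Type*} [CommMonoid M] (ρ : Setoid (Fin k))
    (f : Set (Fin k) → M) :
    (∏ᶠ V ∈ Setoid.classes ρ, f V) = ∏ V ∈ CFin ρ, f V := by
  rw [← finprod_mem_coe_finset, coe_CFin]

lemma finsum_mem_setOf {k : ℕ} (p : Setoid (Fin k) → Prop) (f : Setoid (Fin k) → ℂ) :
    (∑ᶠ σ ∈ {σ | p σ}, f σ) = ∑ σ ∈ Finset.univ.filter p, f σ := by
  rw [← finsum_mem_coe_finset]
  congr 1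
  ext σ; simp

lemma ofFn_cast {α : Type*} {m m' : ℕ} (h : m = m') (f : Fin m → α) :
    List.ofFn (fun i : Fin m' => f (Fin.cast h.symm i)) = List.ofFn f := by
  subst h; rfl

lemma enum_range {V : Set (Fin n)} : Set.range (enum V) = V := by
  have := Finset.range_orderEmbOfFin (blockFinset V) rfl
  rw [show Set.range (enum V) = Set.range ((blockFinset V).orderEmbOfFin rfl) from rfl, this]
  ext x; exact mem_blockFinset

lemma blockCard_preimage {V C : Set (Fin n)} (hC : C ⊆ V) :
    blockCard (enum V ⁻¹' C : Set (Fin (blockCard V))) = blockCard C := by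
  apply Finset.card_bij (fun a _ => enum V a)
  · intro a ha
    rw [mem_blockFinset]
    exact (mem_blockFinset.mp ha : a ∈ enum V ⁻¹' C)
  · intro a _ b _ hab
    exact enum_injective hab
  · intro x hx
    obtain ⟨i, rfl⟩ := enum_surj (hC (mem_blockFinset.mp hx))
    exact ⟨i, mem_blockFinset.mpr (show enum V i ∈ C from mem_blockFinset.mp hx), rfl⟩

lemma enum_comp {V C : Set (Fin n)} (hC : C ⊆ V)
    (i : Fin (blockCard (enum V ⁻¹' C : Set (Fin (blockCard V))))) :
    enum V (enum (enum V ⁻¹' C : Set (Fin (blockCard V))) i)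
      = enum C (Fin.cast (blockCard_preimage hC) i) := by
  have hcard : blockCard (enum V ⁻¹' C : Set (Fin (blockCard V))) = blockCard C :=
    blockCard_preimage hC
  have hmono : StrictMono (fun j : Fin (blockCard C) =>
      enum V (enum (enum V ⁻¹' C : Set (Fin (blockCard V))) (Fin.cast hcard.symm j))) := by
    intro a b hab
    exact enum_strictMono (enum_strictMono (by simpa using hab))
  have hmem : ∀ j : Fin (blockCard C),
      enum V (enum (enum V ⁻¹' C : Set (Fin (blockCard V))) (Fin.cast hcard.symm j)) ∈ blockFinset C := by
    intro j
    rw [mem_blockFinset]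
    exact enum_mem (V := (enum V ⁻¹' C : Set (Fin (blockCard V)))) (Fin.cast hcard.symm j)
  have huniq := Finset.orderEmbOfFin_unique (s := blockFinset C) (k := blockCard C) rfl hmem hmono
  have h2 := congrFun huniq (Fin.cast hcard i)
  have h3 : Fin.cast hcard.symm (Fin.cast hcard i) = i := rfl
  rw [h3] at h2
  exact h2

/-- The word of a block. -/
noncomputable def word {A : Type*} [Ring A] {k : ℕ} (T : Fin k → A) (C : Set (Fin k)) : A :=
  (List.ofFn (fun i : Fin (blockCard C) => T (enum C i))).prod

lemma phiP_eq_finset {A : Type*} [Ring A] [Algebra ℂ A] {k : ℕ}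
    (φ : A →ₗ[ℂ] ℂ) (σ : Setoid (Fin k)) (T : Fin k → A) :
    phiP φ σ T = ∏ C ∈ CFin σ, φ (word T C) := by
  rw [phiP, finprod_classes_eq]
  rfl

lemma word_restrict {A : Type*} [Ring A] {V C : Set (Fin n)} (hC : C ⊆ V) (T : Fin n → A) :
    word T C = word (fun i => T (enum V i)) (enum V ⁻¹' C) := by
  unfold word
  congr 1
  have : (fun i : Fin (blockCard (enum V ⁻¹' C : Set (Fin (blockCard V)))) =>
      T (enum V (enum (enum V ⁻¹' C : Set (Fin (blockCard V))) i)))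
      = fun i => T (enum C (Fin.cast (blockCard_preimage hC) i)) := by
    funext i; rw [enum_comp hC]
  rw [this]
  exact (ofFn_cast (blockCard_preimage hC).symm (fun i => T (enum C i))).symm

lemma phiP_factor {A : Type*} [Ring A] [Algebra ℂ A]
    (φ : A →ₗ[ℂ] ℂ) {π σ : Setoid (Fin n)} (hle : σ ≤ π) (T : Fin n → A) :
    phiP φ σ T = ∏ V ∈ CFin π,
      phiP φ (Setoid.comap (enum V) σ) (fun i => T (enum V i)) := by
  classical
  rw [phiP_eq_finset]
  set g : Set (Fin n) → Set (Fin n) := fun C => {u | ∃ x ∈ C, π.r u x} with hg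
  have hgC : ∀ C ∈ CFin σ, g C ∈ CFin π := by
    intro C hC
    obtain ⟨x, rfl⟩ := mem_CFin.mp hC
    rw [mem_CFin]
    refine ⟨x, ?_⟩
    ext u
    simp only [hg, Set.mem_setOf_eq]
    constructor
    · rintro ⟨y, hy, hu⟩; exact π.trans' hu (hle hy)
    · intro h; exact ⟨x, σ.refl' x, h⟩
  rw [← Finset.prod_fiberwise_of_maps_to hgC (fun C => φ (word T C))]
  apply Finset.prod_congr rfl
  intro V hV
  have hVc : V ∈ Setoid.classes π := mem_CFin.mp hV
  rw [phiP_eq_finset]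
  have hsubV : ∀ C ∈ (CFin σ).filter (fun C => g C = V), C ⊆ V := by
    intro C hC
    simp only [Finset.mem_filter] at hC
    intro y hy
    rw [← hC.2]
    exact ⟨y, hy, π.refl' y⟩
  apply Finset.prod_nbij' (fun C => enum V ⁻¹' C) (fun W => enum V '' W)
  · -- maps to
    intro C hC
    have hCV : C ⊆ V := hsubV C hC
    simp only [Finset.mem_filter] at hC
    obtain ⟨x, hxdef⟩ := mem_CFin.mp hC.1
    have hxC : x ∈ C := hxdef ▸ σ.refl' x
    obtain ⟨i₀, hi₀⟩ := enum_surj (hCV hxC)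
    rw [mem_CFin]
    refine ⟨i₀, ?_⟩
    ext i
    simp only [Set.mem_preimage, hxdef, Set.mem_setOf_eq]
    show σ.r (enum V i) x ↔ σ.r (enum V i) (enum V i₀)
    rw [hi₀]
  · -- inverse maps to
    intro W hW
    obtain ⟨i₀, hWdef⟩ := mem_CFin.mp hW
    have hCset : enum V '' W = {y | σ.r y (enum V i₀)} := by
      ext y
      constructor
      · rintro ⟨i, hi, rfl⟩
        rw [hWdef] at hi
        exact hi
      · intro hy
        have hyV : y ∈ V := mem_class_of_rel hVc (enum_mem i₀) (π.symm' (hle hy))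
        obtain ⟨j, rfl⟩ := enum_surj hyV
        refine ⟨j, ?_, rfl⟩
        rw [hWdef]
        exact (hy : σ.r (enum V j) (enum V i₀))
    rw [Finset.mem_filter]
    constructor
    · rw [mem_CFin, hCset]; exact ⟨enum V i₀, rfl⟩
    · -- g (enum V '' W) = V
      have hmemcls : enum V '' W ∈ Setoid.classes σ := by
        rw [hCset]; exact ⟨enum V i₀, rfl⟩
      have h1 : g (enum V '' W) ∈ Setoid.classes π := mem_CFin.mp
        (hgC _ (mem_CFin.mpr hmemcls))
      have hx0 : enum V i₀ ∈ enum V '' W := by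
        rw [hCset]; exact σ.refl' _
      have hx0g : enum V i₀ ∈ g (enum V '' W) := ⟨enum V i₀, hx0, π.refl' _⟩
      exact class_unique h1 hVc hx0g (enum_mem i₀)
  · intro C hC
    exact Set.image_preimage_eq_of_subset (by rw [enum_range]; exact hsubV C hC)
  · intro W _
    exact Set.preimage_image_eq W enum_injective
  · intro C hC
    rw [word_restrict (hsubV C hC)]
end Aux4
section Aux5
open scoped Classical
variable {n : ℕ} {χ : Fin n → Bool}

lemma key_bij {π : Setoid (Fin n)} (hπ : π ∈ BNC χ)
    (t : ∀ V : Set (Fin n), Finset (Setoid (Fin (blockCard V))))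
    (G : ∀ V : Set (Fin n), Setoid (Fin (blockCard V)) → ℂ) :
    ∑ σ ∈ Finset.univ.filter (fun σ : Setoid (Fin n) =>
        σ ∈ BNC χ ∧ σ ≤ π ∧ ∀ V ∈ Setoid.classes π, Setoid.comap (enum V) σ ∈ t V),
      ∏ V ∈ CFin π, G V (Setoid.comap (enum V) σ)
    = ∏ V ∈ CFin π, ∑ τ ∈ (t V).filter (fun τ => τ ∈ BNC (fun i => χ (enum V i))), G V τ := by
  classical
  rw [Finset.prod_sum]
  symm
  apply Finset.sum_nbij'
    (i := fun p => joinS π (fun V => if h : V ∈ CFin π then p V h else ⊤))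
    (j := fun σ => fun V _ => Setoid.comap (enum V) σ)
  · -- i maps pi into filter
    intro p hp
    rw [Finset.mem_pi] at hp
    set pf : ∀ V : Set (Fin n), Setoid (Fin (blockCard V)) :=
      fun V => if h : V ∈ CFin π then p V h else ⊤ with hpf
    have hres : ∀ V (hV : V ∈ Setoid.classes π),
        Setoid.comap (enum V) (joinS π pf) = p V (mem_CFin.mpr hV) := by
      intro V hV
      rw [comap_enum_joinS hV]
      simp only [hpf, dif_pos (mem_CFin.mpr hV)]
    rw [Finset.mem_filter]
    refine ⟨Finset.mem_univ _, ?_, joinS_le, ?_⟩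
    · apply join_mem_BNC hπ joinS_le
      intro V hV
      rw [hres V hV]
      exact (Finset.mem_filter.mp (hp V (mem_CFin.mpr hV))).2
    · intro V hV
      rw [hres V hV]
      exact (Finset.mem_filter.mp (hp V (mem_CFin.mpr hV))).1
  · -- j maps filter into pi
    intro σ hσ
    rw [Finset.mem_filter] at hσ
    obtain ⟨-, hBNC, hle, hmem⟩ := hσ
    rw [Finset.mem_pi]
    intro V hV
    rw [Finset.mem_filter]
    exact ⟨hmem V (mem_CFin.mp hV), restrict_mem_BNC hBNC V⟩
  · -- left inverse
    intro p hp
    funext V h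
    rw [comap_enum_joinS (mem_CFin.mp h)]
    simp only [dif_pos h]
  · -- right inverse
    intro σ hσ
    rw [Finset.mem_filter] at hσ
    obtain ⟨-, _, hle, -⟩ := hσ
    apply eq_of_restrictions_eq joinS_le hle
    intro V hV
    rw [comap_enum_joinS hV]
    simp only [dif_pos (mem_CFin.mpr hV)]
  · -- values
    intro p hp
    have : ∀ x : {x // x ∈ CFin π}, x ∈ (CFin π).attach →
        G x.1 (p x.1 x.2) = G x.1 (Setoid.comap (enum x.1)
          (joinS π (fun V => if h : V ∈ CFin π then p V h else ⊤))) := by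
      intro x _
      rw [comap_enum_joinS (mem_CFin.mp x.2)]
      simp only [dif_pos x.2]
    rw [Finset.prod_congr rfl this]
    exact Finset.prod_attach (CFin π)
      (fun V => G V (Setoid.comap (enum V) (joinS π (fun V => if h : V ∈ CFin π then p V h else ⊤))))

lemma comap_enum_mono {σ ρ : Setoid (Fin n)} (h : σ ≤ ρ) (V : Set (Fin n)) :
    Setoid.comap (enum V) σ ≤ Setoid.comap (enum V) ρ := by
  rw [setoid_le_iff]
  intro i j hij
  exact h hij

lemma le_of_restrictions_le {π σ ρ : Setoid (Fin n)} (hσ : σ ≤ π)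
    (h : ∀ V ∈ Setoid.classes π, Setoid.comap (enum V) σ ≤ Setoid.comap (enum V) ρ) :
    σ ≤ ρ := by
  rw [setoid_le_iff]
  intro x y hxy
  have hπ : π.r x y := hσ hxy
  set V : Set (Fin n) := {u | π.r u x} with hVdef
  have hV : V ∈ Setoid.classes π := class_mem_classes _
  obtain ⟨i, hi⟩ := enum_surj (mem_own_class (π := π) x)
  obtain ⟨j, hj⟩ := enum_surj (show y ∈ V from π.symm' hπ)
  have h1 : (Setoid.comap (enum V) σ).r i j := by
    show σ.r _ _; rw [hi, hj]; exact hxy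
  have h2 := h V hV h1
  have : ρ.r (enum V i) (enum V j) := h2
  rwa [hi, hj] at this

lemma eq_top_iff_restrictions {π σ : Setoid (Fin n)} (hle : σ ≤ π) :
    σ = π ↔ ∀ V ∈ Setoid.classes π, Setoid.comap (enum V) σ = ⊤ := by
  constructor
  · rintro rfl V hV; exact comap_enum_top hV
  · intro h
    apply eq_of_restrictions_eq hle (le_refl π)
    intro V hV
    rw [h V hV, comap_enum_top hV]
end Aux5
section Aux6
open scoped Classical
variable {n : ℕ} {χ : Fin n → Bool}

lemma kappaP_eq_finset {A : Type*} [Ring A] [Algebra ℂ A]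
    (φ : A →ₗ[ℂ] ℂ) (μ : ∀ m : ℕ, (Fin m → Bool) → Setoid (Fin m) → Setoid (Fin m) → ℂ)
    (χ : Fin n → Bool) (π : Setoid (Fin n)) (T : Fin n → A) :
    kappaP φ μ χ π T = ∑ σ ∈ Finset.univ.filter (fun σ => σ ∈ BNC χ ∧ σ ≤ π),
      phiP φ σ T * μ n χ σ π := by
  rw [kappaP, finsum_mem_setOf]
  congr

lemma mu_mult
    (μ : ∀ m : ℕ, (Fin m → Bool) → Setoid (Fin m) → Setoid (Fin m) → ℂ)
    (hμ2 : ∀ (m : ℕ) (χ : Fin m → Bool), ∀ π ∈ BNC χ, ∀ σ ∈ BNC χ,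
      (∑ᶠ ρ ∈ {ρ | ρ ∈ BNC χ ∧ π ≤ ρ ∧ ρ ≤ σ}, μ m χ ρ σ) = if π = σ then 1 else 0)
    {π : Setoid (Fin n)} (hπ : π ∈ BNC χ) :
    ∀ σ, σ ∈ BNC χ → σ ≤ π →
      μ n χ σ π = ∏ V ∈ CFin π,
        μ (blockCard V) (fun i => χ (enum V i)) (Setoid.comap (enum V) σ) ⊤ := by
  classical
  set ν : Setoid (Fin n) → ℂ := fun ρ => ∏ V ∈ CFin π,
    μ (blockCard V) (fun i => χ (enum V i)) (Setoid.comap (enum V) ρ) ⊤ with hν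
  set I : Setoid (Fin n) → Finset (Setoid (Fin n)) := fun σ =>
    Finset.univ.filter (fun ρ => ρ ∈ BNC χ ∧ σ ≤ ρ ∧ ρ ≤ π) with hI
  -- the ν-sum identity
  have S2 : ∀ σ, σ ∈ BNC χ → σ ≤ π → (∑ ρ ∈ I σ, ν ρ) = if σ = π then 1 else 0 := by
    intro σ hσ hle
    have hfe : I σ = Finset.univ.filter (fun ρ : Setoid (Fin n) =>
        ρ ∈ BNC χ ∧ ρ ≤ π ∧ ∀ V ∈ Setoid.classes π,
          Setoid.comap (enum V) ρ ∈ Finset.univ.filter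
            (fun τ => Setoid.comap (enum V) σ ≤ τ)) := by
      ext ρ
      simp only [hI, Finset.mem_filter, Finset.mem_univ, true_and]
      constructor
      · rintro ⟨h1, h2, h3⟩
        exact ⟨h1, h3, fun V hV => comap_enum_mono h2 V⟩
      · rintro ⟨h1, h2, h3⟩
        refine ⟨h1, ?_, h2⟩
        apply le_of_restrictions_le hle
        intro V hV
        exact h3 V hV
    rw [hfe]
    rw [key_bij hπ (fun V => Finset.univ.filter (fun τ => Setoid.comap (enum V) σ ≤ τ))
      (fun V τ => μ (blockCard V) (fun i => χ (enum V i)) τ ⊤)]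
    have hblock : ∀ V ∈ CFin π,
        (∑ τ ∈ (Finset.univ.filter (fun τ => Setoid.comap (enum V) σ ≤ τ)).filter
            (fun τ => τ ∈ BNC (fun i => χ (enum V i))),
          μ (blockCard V) (fun i => χ (enum V i)) τ ⊤)
        = if Setoid.comap (enum V) σ = ⊤ then 1 else 0 := by
      intro V hV
      have h := hμ2 (blockCard V) (fun i => χ (enum V i)) (Setoid.comap (enum V) σ)
        (restrict_mem_BNC hσ V) ⊤ top_mem_BNC
      rw [finsum_mem_setOf] at h
      rw [← h]
      apply Finset.sum_congr _ (fun _ _ => rfl)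
      ext τ
      simp only [Finset.mem_filter, Finset.mem_univ, true_and]
      constructor
      · rintro ⟨h1, h2⟩; exact ⟨h2, h1, le_top⟩
      · rintro ⟨h1, h2, _⟩; exact ⟨h2, h1⟩
    rw [Finset.prod_congr rfl hblock, Finset.prod_boole]
    congr 1
    rw [eq_iff_iff]
    constructor
    · intro h
      exact (eq_top_iff_restrictions hle).mpr (fun V hV => h V (mem_CFin.mpr hV))
    · intro h
      exact fun V hV => (eq_top_iff_restrictions hle).mp h V (mem_CFin.mp hV)
  -- the μ-sum identity
  have S1 : ∀ σ, σ ∈ BNC χ → σ ≤ π → (∑ ρ ∈ I σ, μ n χ ρ π) = if σ = π then 1 else 0 := by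
    intro σ hσ hle
    have h := hμ2 n χ σ hσ π hπ
    rw [finsum_mem_setOf] at h
    rw [← h]
    apply Finset.sum_congr _ (fun _ _ => rfl)
    ext ρ
    simp only [hI, Finset.mem_filter, Finset.mem_univ, true_and]
  -- strong induction
  have main : ∀ N : ℕ, ∀ σ, σ ∈ BNC χ → σ ≤ π → (I σ).card ≤ N → μ n χ σ π = ν σ := by
    intro N
    induction N with
    | zero =>
      intro σ hσ hle hcard
      exfalso
      have hσI : σ ∈ I σ := by
        simp only [hI, Finset.mem_filter, Finset.mem_univ, true_and]
        exact ⟨hσ, le_refl σ, hle⟩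
      have := Finset.card_pos.mpr ⟨σ, hσI⟩
      omega
    | succ N ih =>
      intro σ hσ hle hcard
      have hσI : σ ∈ I σ := by
        simp only [hI, Finset.mem_filter, Finset.mem_univ, true_and]
        exact ⟨hσ, le_refl σ, hle⟩
      have e1 := Finset.add_sum_erase _ (fun ρ => μ n χ ρ π) hσI
      have e2 := Finset.add_sum_erase _ ν hσI
      rw [S1 σ hσ hle] at e1
      rw [S2 σ hσ hle] at e2
      have hE : (∑ ρ ∈ (I σ).erase σ, μ n χ ρ π) = ∑ ρ ∈ (I σ).erase σ, ν ρ := by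
        apply Finset.sum_congr rfl
        intro ρ hρ
        have hρne : ρ ≠ σ := (Finset.mem_erase.mp hρ).1
        have hρI : ρ ∈ I σ := (Finset.mem_erase.mp hρ).2
        simp only [hI, Finset.mem_filter, Finset.mem_univ, true_and] at hρI
        obtain ⟨hρB, hσρ, hρπ⟩ := hρI
        apply ih ρ hρB hρπ
        have hsub : I ρ ⊆ (I σ).erase σ := by
          intro ρ' hρ'
          simp only [hI, Finset.mem_filter, Finset.mem_univ, true_and] at hρ'
          obtain ⟨h1, h2, h3⟩ := hρ'
          rw [Finset.mem_erase]
          constructor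
          · intro heq
            subst heq
            exact hρne (le_antisymm h2 hσρ)
          · simp only [hI, Finset.mem_filter, Finset.mem_univ, true_and]
            exact ⟨h1, le_trans hσρ h2, h3⟩
        have := Finset.card_le_card hsub
        have := Finset.card_erase_of_mem hσI
        omega
      have h1 : μ n χ σ π + (∑ x ∈ (I σ).erase σ, μ n χ x π)
          = ν σ + (∑ x ∈ (I σ).erase σ, ν x) := e1.trans e2.symm
      rw [hE] at h1
      exact add_right_cancel h1
  intro σ hσ hle
  exact main (I σ).card σ hσ hle le_rfl

lemma top_rel (x y : Fin n) : (⊤ : Setoid (Fin n)).r x y := by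
  trivial

lemma phiP_top {A : Type*} [Ring A] [Algebra ℂ A]
    (φ : A →ₗ[ℂ] ℂ) (hφ : φ 1 = 1) (T : Fin n → A) :
    phiP φ (⊤ : Setoid (Fin n)) T = φ (List.ofFn T).prod := by
  rcases Nat.eq_zero_or_pos n with hn | hn
  · subst hn
    have hcl : Setoid.classes (⊤ : Setoid (Fin 0)) = ∅ := by
      ext C
      simp only [Set.mem_empty_iff_false, iff_false]
      rintro ⟨y, -⟩
      exact y.elim0
    rw [phiP, hcl, finprod_mem_empty]
    have : List.ofFn T = [] := by
      ext1 i
      simp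
    rw [this]
    simp [hφ]
  · have hcl : Setoid.classes (⊤ : Setoid (Fin n)) = {Set.univ} := by
      ext C
      constructor
      · rintro ⟨y, rfl⟩
        simp only [Set.mem_singleton_iff]
        ext x
        simp [top_rel]
      · rintro rfl
        refine ⟨⟨0, hn⟩, ?_⟩
        ext x
        simp [top_rel]
    rw [phiP, hcl, finprod_mem_singleton]
    have hbc : blockCard (Set.univ : Set (Fin n)) = n := by
      simp [blockCard, blockFinset]
    have hf : StrictMono (fun i : Fin n => enum Set.univ (Fin.cast hbc.symm i)) := by
      intro a b hab
      exact enum_strictMono (by simpa using hab)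
    have hinj : Function.Injective (fun i : Fin n => enum Set.univ (Fin.cast hbc.symm i)) :=
      hf.injective
    have hsurj : Function.Surjective (fun i : Fin n => enum Set.univ (Fin.cast hbc.symm i)) :=
      Finite.surjective_of_injective hinj
    have hid : (fun i : Fin n => enum Set.univ (Fin.cast hbc.symm i)) = id := by
      apply (hf.range_inj strictMono_id).mp
      rw [hsurj.range_eq, Set.range_id]
    have hword : (List.ofFn (fun i : Fin (blockCard (Set.univ : Set (Fin n))) =>
        T (enum Set.univ i))) = List.ofFn T := by
      rw [← ofFn_cast hbc (fun i : Fin (blockCard (Set.univ : Set (Fin n))) => T (enum Set.univ i))]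
      congr 1
      funext i
      have := congrFun hid i
      simp only [id_eq] at this
      rw [this]
    rw [hword]
end Aux6
open scoped Classical

/-- With `κ_π` defined by Möbius inversion from the moments, the cumulant functional
factors over the blocks of `π`:
`κ_π(T_1,…,T_n) = Π_{V ∈ π} κ_{π|_V}(T|_V)` (the restriction of `π` to a block being the
one-block partition `⊤`), and moreover `φ(T_1⋯T_n) = Σ_{π ∈ BNC(χ)} κ_π(T_1,…,T_n)`. -/
theorem kappaP_factors_and_moment_formula (A : Type*) [Ring A] [Algebra ℂ A]
    (φ : A →ₗ[ℂ] ℂ) (hφ : φ 1 = 1)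
    (μ : ∀ m : ℕ, (Fin m → Bool) → Setoid (Fin m) → Setoid (Fin m) → ℂ)
    (hμ1 : ∀ (m : ℕ) (χ : Fin m → Bool), ∀ π ∈ BNC χ, ∀ σ ∈ BNC χ,
      (∑ᶠ ρ ∈ {ρ | ρ ∈ BNC χ ∧ π ≤ ρ ∧ ρ ≤ σ}, μ m χ π ρ) = if π = σ then 1 else 0)
    (hμ2 : ∀ (m : ℕ) (χ : Fin m → Bool), ∀ π ∈ BNC χ, ∀ σ ∈ BNC χ,
      (∑ᶠ ρ ∈ {ρ | ρ ∈ BNC χ ∧ π ≤ ρ ∧ ρ ≤ σ}, μ m χ ρ σ) = if π = σ then 1 else 0)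
    (n : ℕ) (χ : Fin n → Bool) :
    (∀ π ∈ BNC χ, ∀ T : Fin n → A,
      kappaP φ μ χ π T = ∏ᶠ V ∈ Setoid.classes π,
        kappaP φ μ (fun i => χ (enum V i)) (⊤ : Setoid (Fin (blockCard V)))
          (fun i => T (enum V i))) ∧
    (∀ T : Fin n → A,
      φ (List.ofFn T).prod = ∑ᶠ π ∈ BNC χ, kappaP φ μ χ π T) := by
  classical
  constructor
  · -- factorization over blocks
    intro π hπ T
    rw [kappaP_eq_finset, finprod_classes_eq]
    have step : ∀ σ ∈ Finset.univ.filter (fun σ : Setoid (Fin n) => σ ∈ BNC χ ∧ σ ≤ π),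
        phiP φ σ T * μ n χ σ π = ∏ V ∈ CFin π,
          (phiP φ (Setoid.comap (enum V) σ) (fun i => T (enum V i))
            * μ (blockCard V) (fun i => χ (enum V i)) (Setoid.comap (enum V) σ) ⊤) := by
      intro σ hσ
      rw [Finset.mem_filter] at hσ
      obtain ⟨-, hB, hle⟩ := hσ
      rw [phiP_factor φ hle T, mu_mult μ hμ2 hπ σ hB hle, ← Finset.prod_mul_distrib]
    rw [Finset.sum_congr rfl step]
    have hfe : Finset.univ.filter (fun σ : Setoid (Fin n) => σ ∈ BNC χ ∧ σ ≤ π)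
        = Finset.univ.filter (fun σ : Setoid (Fin n) => σ ∈ BNC χ ∧ σ ≤ π ∧
            ∀ V ∈ Setoid.classes π, Setoid.comap (enum V) σ ∈
              (Finset.univ : Finset (Setoid (Fin (blockCard V))))) := by
      ext σ
      simp only [Finset.mem_filter, Finset.mem_univ, true_and, and_true]
      exact ⟨fun h => ⟨h.1, h.2, fun _ _ => trivial⟩, fun h => ⟨h.1, h.2.1⟩⟩
    rw [hfe, key_bij hπ (fun _ => Finset.univ)
      (fun V τ => phiP φ τ (fun i => T (enum V i))
        * μ (blockCard V) (fun i => χ (enum V i)) τ ⊤)]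
    apply Finset.prod_congr rfl
    intro V hV
    rw [kappaP_eq_finset]
    apply Finset.sum_congr _ (fun _ _ => rfl)
    ext τ
    simp only [Finset.mem_filter, Finset.mem_univ, true_and, and_true]
    constructor
    · intro h; exact ⟨h, le_top⟩
    · intro h; exact h.1
  · -- moment formula
    intro T
    set B : Finset (Setoid (Fin n)) := Finset.univ.filter (fun σ => σ ∈ BNC χ) with hB
    have hcoe : (↑B : Set (Setoid (Fin n))) = BNC χ := by
      ext σ; simp [hB]
    rw [← hcoe, finsum_mem_coe_finset]
    have e1 : ∀ π ∈ B, kappaP φ μ χ π T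
        = ∑ σ ∈ B, (if σ ≤ π then phiP φ σ T * μ n χ σ π else 0) := by
      intro π _
      rw [kappaP_eq_finset, ← Finset.sum_filter]
      apply Finset.sum_congr _ (fun _ _ => rfl)
      ext σ
      simp only [Finset.mem_filter, Finset.mem_univ, true_and, hB]
    rw [Finset.sum_congr rfl e1, Finset.sum_comm]
    have e2 : ∀ σ ∈ B, (∑ π ∈ B, if σ ≤ π then phiP φ σ T * μ n χ σ π else 0)
        = phiP φ σ T * (if σ = ⊤ then 1 else 0) := by
      intro σ hσB
      rw [Finset.mem_filter] at hσB
      have h := hμ1 n χ σ hσB.2 ⊤ top_mem_BNC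
      rw [finsum_mem_setOf] at h
      have c1 : (∑ π ∈ B, if σ ≤ π then phiP φ σ T * μ n χ σ π else 0)
          = phiP φ σ T * ∑ π ∈ B, (if σ ≤ π then μ n χ σ π else 0) := by
        rw [Finset.mul_sum]
        apply Finset.sum_congr rfl
        intro π _
        rw [mul_ite, mul_zero]
      rw [c1]
      congr 1
      rw [← Finset.sum_filter, ← h]
      apply Finset.sum_congr _ (fun _ _ => rfl)
      ext ρ
      simp only [Finset.mem_filter, Finset.mem_univ, true_and, hB, le_top, and_true]
    rw [Finset.sum_congr rfl e2]
    have e3 : ∀ σ ∈ B, phiP φ σ T * (if σ = ⊤ then 1 else 0)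
        = if σ = ⊤ then phiP φ σ T else 0 := by
      intro σ _
      split_ifs <;> simp
    rw [Finset.sum_congr rfl e3, Finset.sum_ite_eq' B ⊤ (fun σ => phiP φ σ T),
      if_pos (by simp [hB, top_mem_BNC] : (⊤ : Setoid (Fin n)) ∈ B), phiP_top φ hφ T]
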